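/- Let H ≠ ℕ be a numerical semigroup with Frobenius number f = f(H), let k be a field, and set R = k[[H]]. If f − 1 ∈ QF(H), then for every n ≥ f one has ω_Hⁿ = k[[t]] (equality of R-submodules of k[[t]]). -/

import Mathlib

set_option synthInstance.maxHeartbeats 400000
set_option maxHeartbeats 1000000

/-- The Frobenius number of a numerical semigroup `H ⊆ ℕ`: the largest natural number
not in `H` (meaningful when `H ≠ ℕ` and the complement of `H` is finite). -/
noncomputable def frobeniusNumber (H : AddSubmonoid ℕ) : ℕ :=
  sSup {x : ℕ | x ∉ H}

/-- The set of quasi-Frobenius numbers of a numerical semigroup `H`: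
`QF(H) = {x ∈ ℕ \ H : x + h ∈ H for every nonzero h ∈ H}`. -/
def QF (H : AddSubmonoid ℕ) : Set ℕ :=
  {x | x ∉ H ∧ ∀ h ∈ H, h ≠ 0 → x + h ∈ H}

/-- The semigroup power series ring `k[[H]]`: the subalgebra of `k[[t]]` of power series
whose `i`-th coefficient vanishes for all `i ∉ H`. -/
noncomputable def semigroupAlgebra (k : Type*) [Field k] (H : AddSubmonoid ℕ) :
    Subalgebra k (PowerSeries k) where
  carrier := {g | ∀ i : ℕ, i ∉ H → PowerSeries.coeff (R := k) i g = 0}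
  mul_mem' := by
    intro a b ha hb i hi
    rw [PowerSeries.coeff_mul]
    refine Finset.sum_eq_zero ?_
    rintro ⟨p, q⟩ hpq
    replace hpq : p + q = i := Finset.HasAntidiagonal.mem_antidiagonal.mp hpq
    dsimp only
    by_cases hp : p ∈ H
    · by_cases hq : q ∈ H
      · exact absurd (hpq ▸ H.add_mem hp hq) hi
      · rw [hb q hq, mul_zero]
    · rw [ha p hp, zero_mul]
  one_mem' := by
    intro i hi
    have h0 : i ≠ 0 := fun h => hi (h ▸ H.zero_mem)
    rw [PowerSeries.coeff_one, if_neg h0]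
  add_mem' := by
    intro a b ha hb i hi
    rw [map_add, ha i hi, hb i hi, add_zero]
  zero_mem' := by
    intro i hi
    rw [map_zero]
  algebraMap_mem' := by
    intro r i hi
    have h0 : i ≠ 0 := fun h => hi (h ▸ H.zero_mem)
    simp only [PowerSeries.algebraMap_apply, PowerSeries.coeff_C, if_neg h0]

/-- The canonical module `ω_H` of `k[[H]]`: the `k[[H]]`-submodule of `k[[t]]`
generated by the monomials `t^(f(H) - x)` for `x ∈ QF(H)`. -/
noncomputable def canonicalModule (k : Type*) [Field k] (H : AddSubmonoid ℕ) :
    Submodule ↥(semigroupAlgebra k H) (PowerSeries k) :=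
  Submodule.span ↥(semigroupAlgebra k H)
    ((fun x => (PowerSeries.X : PowerSeries k) ^ (frobeniusNumber H - x)) '' QF H)


/-- Let `H ≠ ℕ` be a numerical semigroup with Frobenius number `f` and
`R = k[[H]]`. If `f - 1 ∈ QF(H)`, then `ω_Hⁿ = k[[t]]` for every `n ≥ f`. -/
theorem stmt10 (k : Type*) [Field k] (H : AddSubmonoid ℕ)
    (hfin : ((H : Set ℕ)ᶜ).Finite) (hne : H ≠ ⊤)
    (hqf : frobeniusNumber H - 1 ∈ QF H) :
    ∀ n : ℕ, frobeniusNumber H ≤ n → canonicalModule k H ^ n = ⊤ := by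
  intro n hn
  set f := frobeniusNumber H with hf
  -- basic facts about f
  have hbdd : BddAbove {x : ℕ | x ∉ H} := hfin.bddAbove
  have hle : ∀ i : ℕ, i ∉ H → i ≤ f := fun i hi => le_csSup hbdd hi
  have hfpos : 1 ≤ f := by
    by_contra h
    have hf0 : f = 0 := by omega
    exact hqf.1 (by simpa [hf0] using H.zero_mem)
  have hfne : f ∉ H := by
    obtain ⟨x, hx⟩ : ∃ x : ℕ, x ∉ H := by
      by_contra h
      push_neg at h
      exact hne (by ext y; simp [h y])
    exact Nat.sSup_mem ⟨x, hx⟩ hbdd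
  have hfQF : f ∈ QF H := by
    refine ⟨hfne, fun h hh hh0 => ?_⟩
    by_contra hc
    have := hle _ hc
    omega
  -- 1 and X belong to ω
  have hω1 : (1 : PowerSeries k) ∈ canonicalModule k H := by
    have : (PowerSeries.X : PowerSeries k) ^ (f - f) ∈
        ((fun x => (PowerSeries.X : PowerSeries k) ^ (frobeniusNumber H - x)) '' QF H) :=
      ⟨f, hfQF, rfl⟩
    simpa [canonicalModule] using Submodule.subset_span this
  have hωX : (PowerSeries.X : PowerSeries k) ∈ canonicalModule k H := by
    have : (PowerSeries.X : PowerSeries k) ^ (f - (f - 1)) ∈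
        ((fun x => (PowerSeries.X : PowerSeries k) ^ (frobeniusNumber H - x)) '' QF H) :=
      ⟨f - 1, hqf, rfl⟩
    have h1 : f - (f - 1) = 1 := by omega
    rw [h1, pow_one] at this
    exact Submodule.subset_span this
  have hone : (1 : PowerSeries k) ∈ canonicalModule k H ^ n := by
    simpa using Submodule.pow_mem_pow _ hω1 n
  have hXpow : ∀ m : ℕ, m ≤ n →
      (PowerSeries.X : PowerSeries k) ^ m ∈ canonicalModule k H ^ n := by
    intro m hm
    have h1 : (PowerSeries.X : PowerSeries k) ^ m ∈ canonicalModule k H ^ m :=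
      Submodule.pow_mem_pow _ hωX m
    have h2 : (1 : PowerSeries k) ∈ canonicalModule k H ^ (n - m) := by
      simpa using Submodule.pow_mem_pow _ hω1 (n - m)
    have h3 := Submodule.mul_mem_mul h1 h2
    rw [mul_one] at h3
    have hmn : m + (n - m) = n := by omega
    have heq : canonicalModule k H ^ m * canonicalModule k H ^ (n - m) =
        canonicalModule k H ^ n :=
      (pow_add (canonicalModule k H) m (n - m)).symm.trans (by rw [hmn])
    rwa [heq] at h3
  -- smul lemma
  have hsmul : ∀ (r : PowerSeries k) (hr : r ∈ semigroupAlgebra k H)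
      (x : PowerSeries k), x ∈ canonicalModule k H ^ n →
      r * x ∈ canonicalModule k H ^ n := by
    intro r hr x hx
    have := Submodule.smul_mem (canonicalModule k H ^ n) (⟨r, hr⟩ : semigroupAlgebra k H) hx
    simpa [Algebra.smul_def] using this
  -- now prove the module is top
  rw [eq_top_iff]
  rintro g -
  set P : PowerSeries k :=
    ∑ m ∈ Finset.range (f + 1), PowerSeries.C (R := k) (PowerSeries.coeff (R := k) m g) *
      (PowerSeries.X : PowerSeries k) ^ m with hP
  have hcoeffP : ∀ i : ℕ, i ≤ f → PowerSeries.coeff (R := k) i P = PowerSeries.coeff (R := k) i g := by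
    intro i hi
    rw [hP, map_sum]
    have : ∀ m ∈ Finset.range (f + 1),
        PowerSeries.coeff (R := k) i (PowerSeries.C (R := k) (PowerSeries.coeff (R := k) m g) *
          (PowerSeries.X : PowerSeries k) ^ m) =
        if m = i then PowerSeries.coeff (R := k) m g else 0 := by
      intro m _
      rw [PowerSeries.coeff_C_mul, PowerSeries.coeff_X_pow]
      by_cases h : i = m <;> simp [h, eq_comm]
    rw [Finset.sum_congr rfl this, Finset.sum_ite_eq']
    simp [Finset.mem_range, Nat.lt_succ_of_le hi]
  have hgP : g - P ∈ semigroupAlgebra k H := by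
    intro i hi
    have hif : i ≤ f := hle i hi
    rw [map_sub, hcoeffP i hif, sub_self]
  have hPmem : P ∈ canonicalModule k H ^ n := by
    refine Submodule.sum_mem _ (fun m hm => ?_)
    have hmn : m ≤ n := by
      have := Finset.mem_range.mp hm
      omega
    exact hsmul _ ((semigroupAlgebra k H).algebraMap_mem' (PowerSeries.coeff (R := k) m g)) _
      (hXpow m hmn)
  have hgPmem : g - P ∈ canonicalModule k H ^ n := by
    have := hsmul _ hgP _ hone
    simpa using this
  have : (g - P) + P ∈ canonicalModule k H ^ n := Submodule.add_mem _ hgPmem hPmem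
  simpa using this
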